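/- Set μ₀ = 1 and fix μ₁ ∈ ℝ and a control value u ∈ ℝ. On the open set Ω = {(x₁, x₂, p₁, p₂) ∈ ℝ⁴ : x₁² + x₂² < 1} consider the vector field F_u(x₁, x₂, p₁, p₂) = ( x₂, u·((1 − x₁² − x₂²)/(1 − x₁²))^(3/2) − x₁, −∂H/∂x₁, −∂H/∂x₂ ), where H is Pontryagin's function below, and let H₁(x₁, x₂, p₂) = μ₁·√(1 − x₁² − x₂²)/(1 − x₁²) + p₂·((1 − x₁² − x₂²)/(1 − x₁²))^(3/2). Then at every point of Ω lying on the singular locus, i.e. satisfying p₂ = −μ₁·√(1 − x₁²)/(1 − x₁² − x₂²) and p₁ = −x₂·( μ₁·x₁·√(1 − x₁²) + √(1 − x₁² − x₂²) ) / ( (1 − x₁²)·(1 − x₁² − x₂²) ), the partial derivative with respect to u of the iterated directional derivative F_u(F_u(H₁)) equals −(1 − x₁² − x₂²)^(3/2)/(1 − x₁²)³, which is strictly negative. Consequently the singular trajectory has order 1 and violates the generalized Legendre–Clebsch condition (−1)·(∂/∂u)(d²H₁/dt²) ≤ 0. -/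

import Mathlib

open Real Topology Filter

/-- Pontryagin's function (normal case `μ₀ = 1`) for the optimal control
problem to which the isoperimetric problem for `λ`-convex curves on the
hyperbolic plane of curvature `-1` is reduced. -/
noncomputable def pontryaginH (μ₁ x₁ x₂ p₁ p₂ u : ℝ) : ℝ :=
  p₁ * x₂ + p₂ * (u * ((1 - x₁ ^ 2 - x₂ ^ 2) / (1 - x₁ ^ 2)) ^ ((3 : ℝ) / 2) - x₁)
    + μ₁ * u * Real.sqrt (1 - x₁ ^ 2 - x₂ ^ 2) / (1 - x₁ ^ 2)
    - (Real.sqrt (1 - x₁ ^ 2 - x₂ ^ 2) / (1 - x₁ ^ 2) - 1)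

/-- The combined phase-adjoint vector field on `ℝ⁴`, with the control held at
the constant value `u`: the phase equations together with the adjoint
equations `ṗᵢ = -∂H/∂xᵢ`. A point `z : ℝ × ℝ × ℝ × ℝ` is read as
`(x₁, x₂, p₁, p₂)`. -/
noncomputable def combinedField (μ₁ u : ℝ) (z : ℝ × ℝ × ℝ × ℝ) : ℝ × ℝ × ℝ × ℝ :=
  (z.2.1,
   u * ((1 - z.1 ^ 2 - z.2.1 ^ 2) / (1 - z.1 ^ 2)) ^ ((3 : ℝ) / 2) - z.1,
   -(deriv (fun y => pontryaginH μ₁ y z.2.1 z.2.2.1 z.2.2.2 u) z.1),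
   -(deriv (fun y => pontryaginH μ₁ z.1 y z.2.2.1 z.2.2.2 u) z.2.1))

/-- The switching function `H₁ = ∂H/∂u` as a function on `ℝ⁴`. -/
noncomputable def switchingFn (μ₁ : ℝ) (z : ℝ × ℝ × ℝ × ℝ) : ℝ :=
  μ₁ * Real.sqrt (1 - z.1 ^ 2 - z.2.1 ^ 2) / (1 - z.1 ^ 2)
    + z.2.2.2 * ((1 - z.1 ^ 2 - z.2.1 ^ 2) / (1 - z.1 ^ 2)) ^ ((3 : ℝ) / 2)

/-- The derivative of a scalar function along the flow of the combined
phase-adjoint vector field with the control held at `u`. -/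
noncomputable def fieldDeriv (μ₁ u : ℝ) (f : ℝ × ℝ × ℝ × ℝ → ℝ)
    (z : ℝ × ℝ × ℝ × ℝ) : ℝ :=
  fderiv ℝ f z (combinedField μ₁ u z)

/- ---------------- auxiliary material ---------------- -/

/-- A nice (`Real.sqrt`-based) form of the switching function. -/
noncomputable def LCHn (μ₁ : ℝ) (z : ℝ × ℝ × ℝ × ℝ) : ℝ :=
  μ₁ * (Real.sqrt (1 - z.1 ^ 2 - z.2.1 ^ 2) / Real.sqrt (1 - z.1 ^ 2) ^ 2)
    + z.2.2.2 * (Real.sqrt (1 - z.1 ^ 2 - z.2.1 ^ 2) ^ 3 / Real.sqrt (1 - z.1 ^ 2) ^ 3)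

/-- The derivative of the switching function along the flow (independent of
the control). -/
noncomputable def LCGn (μ₁ : ℝ) (z : ℝ × ℝ × ℝ × ℝ) : ℝ :=
  2 * μ₁ * z.1 * z.2.1 * Real.sqrt (1 - z.1 ^ 2 - z.2.1 ^ 2) / Real.sqrt (1 - z.1 ^ 2) ^ 4
    + 3 * z.2.2.2 * z.1 * z.2.1 * Real.sqrt (1 - z.1 ^ 2 - z.2.1 ^ 2) ^ 3
        / Real.sqrt (1 - z.1 ^ 2) ^ 5
    - z.2.2.1 * Real.sqrt (1 - z.1 ^ 2 - z.2.1 ^ 2) ^ 3 / Real.sqrt (1 - z.1 ^ 2) ^ 3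
    - z.2.1 * Real.sqrt (1 - z.1 ^ 2 - z.2.1 ^ 2) ^ 2 / Real.sqrt (1 - z.1 ^ 2) ^ 5

theorem LC.rpow32 (s b : ℝ) (hs : 0 ≤ s) (hb : 0 ≤ b) :
    (s / b) ^ ((3:ℝ)/2) = Real.sqrt s ^ 3 / Real.sqrt b ^ 3 := by
  have h : (0:ℝ) ≤ s / b := div_nonneg hs hb
  rw [show ((3:ℝ)/2) = (1/(2:ℝ)) * ((3:ℕ):ℝ) by norm_num, Real.rpow_mul h,
    Real.rpow_natCast, ← Real.sqrt_eq_rpow, Real.sqrt_div hs, div_pow]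

/-- `∂H/∂x₁`. -/
theorem LC.derivP1 (μ₁ u q₁ q₂ a c : ℝ) (h : a ^ 2 + c ^ 2 < 1) :
    deriv (fun y => pontryaginH μ₁ y c q₁ q₂ u) a
      = q₂ * (u * (-3 * a * Real.sqrt (1 - a^2 - c^2) *
            (Real.sqrt (1 - a^2) ^ 2 - Real.sqrt (1 - a^2 - c^2) ^ 2) / Real.sqrt (1 - a^2) ^ 5) - 1)
        + (μ₁ * u - 1) * (a * (2 * Real.sqrt (1 - a^2 - c^2) ^ 2 - Real.sqrt (1 - a^2) ^ 2)
            / (Real.sqrt (1 - a^2 - c^2) * Real.sqrt (1 - a^2) ^ 4)) := by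
  have hb : 0 < 1 - a ^ 2 := by nlinarith [sq_nonneg c]
  have hs : 0 < 1 - a ^ 2 - c ^ 2 := by nlinarith
  have hw : 0 < Real.sqrt (1 - a ^ 2) := Real.sqrt_pos.mpr hb
  have hr : 0 < Real.sqrt (1 - a ^ 2 - c ^ 2) := Real.sqrt_pos.mpr hs
  have hev : (fun y => pontryaginH μ₁ y c q₁ q₂ u) =ᶠ[𝓝 a] (fun y =>
      q₁ * c + q₂ * (u * (Real.sqrt (1 - y^2 - c^2) ^ 3 / Real.sqrt (1 - y^2) ^ 3) - y)
      + μ₁ * u * (Real.sqrt (1 - y^2 - c^2) / Real.sqrt (1 - y^2) ^ 2)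
      - (Real.sqrt (1 - y^2 - c^2) / Real.sqrt (1 - y^2) ^ 2 - 1)) := by
    have hopen : IsOpen {y : ℝ | y ^ 2 + c ^ 2 < 1} :=
      isOpen_lt (by fun_prop) continuous_const
    filter_upwards [hopen.mem_nhds (by simpa using h)] with y hy
    have hy' : y ^ 2 + c ^ 2 < 1 := hy
    have hb' : 0 < 1 - y ^ 2 := by nlinarith [sq_nonneg c]
    have hs' : 0 ≤ 1 - y ^ 2 - c ^ 2 := by nlinarith
    simp only [pontryaginH]
    rw [LC.rpow32 _ _ hs' hb'.le, Real.sq_sqrt hb'.le]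
    ring
  have h1 : HasDerivAt (fun y : ℝ => 1 - y ^ 2 - c ^ 2) (-(2 * a)) a := by
    simpa using (((hasDerivAt_pow 2 a)).const_sub 1).sub_const (c ^ 2)
  have h2 : HasDerivAt (fun y : ℝ => 1 - y ^ 2) (-(2 * a)) a := by
    simpa using ((hasDerivAt_pow 2 a)).const_sub 1
  have hR := h1.sqrt hs.ne'
  have hW := h2.sqrt hb.ne'
  have hq := (hR.fun_pow 3).fun_div (hW.fun_pow 3) (pow_ne_zero _ hw.ne')
  have hRW2 := hR.fun_div (hW.fun_pow 2) (pow_ne_zero _ hw.ne')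
  have main := (((((hq.const_mul u).sub (hasDerivAt_id a)).const_mul q₂).const_add
      (q₁ * c)).add (hRW2.const_mul (μ₁ * u))).sub (hRW2.sub_const 1)
  have main' := main.congr_of_eventuallyEq hev
  rw [main'.deriv]
  have hr' : Real.sqrt (1 - a ^ 2 - c ^ 2) ≠ 0 := hr.ne'
  have hw' : Real.sqrt (1 - a ^ 2) ≠ 0 := hw.ne'
  set S := Real.sqrt (1 - a ^ 2 - c ^ 2) with hSdef
  set W := Real.sqrt (1 - a ^ 2) with hWdef
  field_simp
  ring

/-- `∂H/∂x₂`. -/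
theorem LC.derivP2 (μ₁ u q₁ q₂ a c : ℝ) (h : a ^ 2 + c ^ 2 < 1) :
    deriv (fun y => pontryaginH μ₁ a y q₁ q₂ u) c
      = q₁ - 3 * q₂ * u * c * Real.sqrt (1 - a^2 - c^2) / Real.sqrt (1 - a^2) ^ 3
        - (μ₁ * u - 1) * (c / (Real.sqrt (1 - a^2 - c^2) * Real.sqrt (1 - a^2) ^ 2)) := by
  have hb : 0 < 1 - a ^ 2 := by nlinarith [sq_nonneg c]
  have hs : 0 < 1 - a ^ 2 - c ^ 2 := by nlinarith
  have hw : 0 < Real.sqrt (1 - a ^ 2) := Real.sqrt_pos.mpr hb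
  have hr : 0 < Real.sqrt (1 - a ^ 2 - c ^ 2) := Real.sqrt_pos.mpr hs
  have hev : (fun y => pontryaginH μ₁ a y q₁ q₂ u) =ᶠ[𝓝 c] (fun y =>
      q₁ * y + q₂ * (u * (Real.sqrt (1 - a^2 - y^2) ^ 3 / Real.sqrt (1 - a^2) ^ 3) - a)
      + μ₁ * u * (Real.sqrt (1 - a^2 - y^2) / Real.sqrt (1 - a^2) ^ 2)
      - (Real.sqrt (1 - a^2 - y^2) / Real.sqrt (1 - a^2) ^ 2 - 1)) := by
    have hopen : IsOpen {y : ℝ | a ^ 2 + y ^ 2 < 1} :=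
      isOpen_lt (by fun_prop) continuous_const
    filter_upwards [hopen.mem_nhds (by simpa using h)] with y hy
    have hy' : a ^ 2 + y ^ 2 < 1 := hy
    have hb' : 0 < 1 - a ^ 2 := by nlinarith [sq_nonneg y]
    have hs' : 0 ≤ 1 - a ^ 2 - y ^ 2 := by nlinarith
    simp only [pontryaginH]
    rw [LC.rpow32 _ _ hs' hb'.le, Real.sq_sqrt hb'.le]
    ring
  have h1 : HasDerivAt (fun y : ℝ => 1 - a ^ 2 - y ^ 2) (-(2 * c)) c := by
    simpa using ((hasDerivAt_pow 2 c)).const_sub (1 - a ^ 2)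
  have hR := h1.sqrt hs.ne'
  have hq := (hR.pow 3).div_const (Real.sqrt (1 - a^2) ^ 3)
  have hRW2 := hR.div_const (Real.sqrt (1 - a^2) ^ 2)
  have main := ((((hasDerivAt_id c).const_mul q₁).add
      (((hq.const_mul u).sub_const a).const_mul q₂)).add (hRW2.const_mul (μ₁ * u))).sub
      (hRW2.sub_const 1)
  have main' := main.congr_of_eventuallyEq hev
  rw [main'.deriv]
  have hr' : Real.sqrt (1 - a ^ 2 - c ^ 2) ≠ 0 := hr.ne'
  have hw' : Real.sqrt (1 - a ^ 2) ≠ 0 := hw.ne'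
  set S := Real.sqrt (1 - a ^ 2 - c ^ 2) with hSdef
  set W := Real.sqrt (1 - a ^ 2) with hWdef
  field_simp
  ring

/-- Explicit form of the combined vector field on `Ω`. -/
theorem LC.combinedField_eq (μ₁ v : ℝ) (z : ℝ × ℝ × ℝ × ℝ)
    (h : z.1 ^ 2 + z.2.1 ^ 2 < 1) :
    combinedField μ₁ v z =
      (z.2.1,
       v * (Real.sqrt (1 - z.1^2 - z.2.1^2) ^ 3 / Real.sqrt (1 - z.1^2) ^ 3) - z.1,
       -(z.2.2.2 * (v * (-3 * z.1 * Real.sqrt (1 - z.1^2 - z.2.1^2) *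
            (Real.sqrt (1 - z.1^2) ^ 2 - Real.sqrt (1 - z.1^2 - z.2.1^2) ^ 2)
              / Real.sqrt (1 - z.1^2) ^ 5) - 1)
         + (μ₁ * v - 1) * (z.1 * (2 * Real.sqrt (1 - z.1^2 - z.2.1^2) ^ 2
              - Real.sqrt (1 - z.1^2) ^ 2)
            / (Real.sqrt (1 - z.1^2 - z.2.1^2) * Real.sqrt (1 - z.1^2) ^ 4))),
       -(z.2.2.1 - 3 * z.2.2.2 * v * z.2.1 * Real.sqrt (1 - z.1^2 - z.2.1^2)
            / Real.sqrt (1 - z.1^2) ^ 3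
         - (μ₁ * v - 1) * (z.2.1 / (Real.sqrt (1 - z.1^2 - z.2.1^2)
            * Real.sqrt (1 - z.1^2) ^ 2)))) := by
  have hb : 0 < 1 - z.1 ^ 2 := by nlinarith [sq_nonneg z.2.1]
  have hs : 0 < 1 - z.1 ^ 2 - z.2.1 ^ 2 := by nlinarith
  simp only [combinedField]
  rw [LC.derivP1 μ₁ v z.2.2.1 z.2.2.2 z.1 z.2.1 h, LC.derivP2 μ₁ v z.2.2.1 z.2.2.2 z.1 z.2.1 h,
    LC.rpow32 _ _ hs.le hb.le]

/-- Directional derivative of a differentiable function. -/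
theorem LC.fderiv_along (f : ℝ × ℝ × ℝ × ℝ → ℝ) (z v : ℝ × ℝ × ℝ × ℝ)
    (hf : DifferentiableAt ℝ f z) :
    fderiv ℝ f z v = deriv (fun t : ℝ => f (z + t • v)) 0 := by
  have h1 : HasDerivAt (fun t : ℝ => z + t • v) v 0 := by
    simpa using ((hasDerivAt_id (0:ℝ)).smul_const v).const_add z
  have hL : HasFDerivAt f (fderiv ℝ f z) (z + (0:ℝ) • v) := by
    simpa using hf.hasFDerivAt
  have h3 := HasFDerivAt.comp_hasDerivAt 0 hL h1
  have h2 : HasDerivAt (fun t : ℝ => f (z + t • v)) (fderiv ℝ f z v) 0 := by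
    exact h3
  exact h2.deriv.symm

theorem LC.diffHn (μ₁ : ℝ) (z : ℝ × ℝ × ℝ × ℝ) (h : z.1 ^ 2 + z.2.1 ^ 2 < 1) :
    DifferentiableAt ℝ (LCHn μ₁) z := by
  have hb : 0 < 1 - z.1 ^ 2 := by nlinarith [sq_nonneg z.2.1]
  have hs : 0 < 1 - z.1 ^ 2 - z.2.1 ^ 2 := by nlinarith
  have hw : 0 < Real.sqrt (1 - z.1 ^ 2) := Real.sqrt_pos.mpr hb
  have h1 : DifferentiableAt ℝ (fun z : ℝ × ℝ × ℝ × ℝ => 1 - z.1 ^ 2 - z.2.1 ^ 2) z :=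
    ((differentiableAt_const (1:ℝ)).sub (differentiableAt_fst.pow 2)).sub
      (differentiableAt_snd.fst.pow 2)
  have h2 : DifferentiableAt ℝ (fun z : ℝ × ℝ × ℝ × ℝ => 1 - z.1 ^ 2) z :=
    (differentiableAt_const (1:ℝ)).sub (differentiableAt_fst.pow 2)
  have hR := h1.sqrt hs.ne'
  have hW := h2.sqrt hb.ne'
  have hfe : LCHn μ₁ = (fun y : ℝ × ℝ × ℝ × ℝ =>
      μ₁ * (Real.sqrt (1 - y.1 ^ 2 - y.2.1 ^ 2) * (Real.sqrt (1 - y.1 ^ 2) ^ 2)⁻¹)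
      + y.2.2.2 * (Real.sqrt (1 - y.1 ^ 2 - y.2.1 ^ 2) ^ 3
          * (Real.sqrt (1 - y.1 ^ 2) ^ 3)⁻¹)) := by
    funext y
    simp only [LCHn]
    ring
  rw [hfe]
  exact (((hR.mul ((hW.pow 2).inv (pow_ne_zero _ hw.ne'))).const_mul μ₁)).add
    (differentiableAt_snd.snd.snd.mul
      ((hR.pow 3).mul ((hW.pow 3).inv (pow_ne_zero _ hw.ne'))))

theorem LC.diffGn (μ₁ : ℝ) (z : ℝ × ℝ × ℝ × ℝ) (h : z.1 ^ 2 + z.2.1 ^ 2 < 1) :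
    DifferentiableAt ℝ (LCGn μ₁) z := by
  have hb : 0 < 1 - z.1 ^ 2 := by nlinarith [sq_nonneg z.2.1]
  have hs : 0 < 1 - z.1 ^ 2 - z.2.1 ^ 2 := by nlinarith
  have hw : 0 < Real.sqrt (1 - z.1 ^ 2) := Real.sqrt_pos.mpr hb
  have h1 : DifferentiableAt ℝ (fun z : ℝ × ℝ × ℝ × ℝ => 1 - z.1 ^ 2 - z.2.1 ^ 2) z :=
    ((differentiableAt_const (1:ℝ)).sub (differentiableAt_fst.pow 2)).sub
      (differentiableAt_snd.fst.pow 2)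
  have h2 : DifferentiableAt ℝ (fun z : ℝ × ℝ × ℝ × ℝ => 1 - z.1 ^ 2) z :=
    (differentiableAt_const (1:ℝ)).sub (differentiableAt_fst.pow 2)
  have hR := h1.sqrt hs.ne'
  have hW := h2.sqrt hb.ne'
  have hfe : LCGn μ₁ = (fun y : ℝ × ℝ × ℝ × ℝ =>
      2 * μ₁ * y.1 * y.2.1 * Real.sqrt (1 - y.1 ^ 2 - y.2.1 ^ 2)
          * (Real.sqrt (1 - y.1 ^ 2) ^ 4)⁻¹
      + 3 * y.2.2.2 * y.1 * y.2.1 * Real.sqrt (1 - y.1 ^ 2 - y.2.1 ^ 2) ^ 3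
          * (Real.sqrt (1 - y.1 ^ 2) ^ 5)⁻¹
      - y.2.2.1 * Real.sqrt (1 - y.1 ^ 2 - y.2.1 ^ 2) ^ 3 * (Real.sqrt (1 - y.1 ^ 2) ^ 3)⁻¹
      - y.2.1 * Real.sqrt (1 - y.1 ^ 2 - y.2.1 ^ 2) ^ 2 * (Real.sqrt (1 - y.1 ^ 2) ^ 5)⁻¹) := by
    funext y
    simp only [LCGn]
    ring
  rw [hfe]
  exact ((((((differentiableAt_fst.const_mul (2*μ₁)).mul differentiableAt_snd.fst).mul
      hR).mul ((hW.pow 4).inv (pow_ne_zero _ hw.ne'))).add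
    (((((differentiableAt_snd.snd.snd.const_mul 3).mul differentiableAt_fst).mul
      differentiableAt_snd.fst).mul (hR.pow 3)).mul ((hW.pow 5).inv
        (pow_ne_zero _ hw.ne')))).sub
    ((differentiableAt_snd.snd.fst.mul (hR.pow 3)).mul ((hW.pow 3).inv
      (pow_ne_zero _ hw.ne')))).sub
    ((differentiableAt_snd.fst.mul (hR.pow 2)).mul ((hW.pow 5).inv (pow_ne_zero _ hw.ne')))

/-- Directional derivative of the nice switching function. -/
theorem LC.dirHn (μ₁ a c q₁ q₂ V₁ V₂ V₃ V₄ : ℝ) (h : a ^ 2 + c ^ 2 < 1) :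
    deriv (fun t : ℝ => LCHn μ₁ ((a, c, q₁, q₂) + t • (V₁, V₂, V₃, V₄))) 0 =
      (μ₁ * (a * (2 * Real.sqrt (1 - a^2 - c^2) ^ 2 - Real.sqrt (1 - a^2) ^ 2)
          / (Real.sqrt (1 - a^2 - c^2) * Real.sqrt (1 - a^2) ^ 4))
        + q₂ * (-3 * a * Real.sqrt (1 - a^2 - c^2) *
            (Real.sqrt (1 - a^2) ^ 2 - Real.sqrt (1 - a^2 - c^2) ^ 2)
            / Real.sqrt (1 - a^2) ^ 5)) * V₁
      + (-μ₁ * c / (Real.sqrt (1 - a^2 - c^2) * Real.sqrt (1 - a^2) ^ 2)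
        - 3 * q₂ * c * Real.sqrt (1 - a^2 - c^2) / Real.sqrt (1 - a^2) ^ 3) * V₂
      + (Real.sqrt (1 - a^2 - c^2) ^ 3 / Real.sqrt (1 - a^2) ^ 3) * V₄ := by
  have hb : 0 < 1 - a ^ 2 := by nlinarith [sq_nonneg c]
  have hs : 0 < 1 - a ^ 2 - c ^ 2 := by nlinarith
  have hw : 0 < Real.sqrt (1 - a ^ 2) := Real.sqrt_pos.mpr hb
  have hr : 0 < Real.sqrt (1 - a ^ 2 - c ^ 2) := Real.sqrt_pos.mpr hs
  have hfun : (fun t : ℝ => LCHn μ₁ ((a, c, q₁, q₂) + t • (V₁, V₂, V₃, V₄))) =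
      (fun t : ℝ => μ₁ * (Real.sqrt (1 - (a + t*V₁) ^ 2 - (c + t*V₂) ^ 2)
          / Real.sqrt (1 - (a + t*V₁) ^ 2) ^ 2)
        + (q₂ + t*V₄) * (Real.sqrt (1 - (a + t*V₁) ^ 2 - (c + t*V₂) ^ 2) ^ 3
          / Real.sqrt (1 - (a + t*V₁) ^ 2) ^ 3)) := by
    funext t
    simp [LCHn, Prod.smul_mk, Prod.mk_add_mk, smul_eq_mul]
  rw [hfun]
  have hA : HasDerivAt (fun t : ℝ => a + t * V₁) V₁ 0 := by
    simpa using ((hasDerivAt_id (0:ℝ)).mul_const V₁).const_add a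
  have hB : HasDerivAt (fun t : ℝ => c + t * V₂) V₂ 0 := by
    simpa using ((hasDerivAt_id (0:ℝ)).mul_const V₂).const_add c
  have hQ : HasDerivAt (fun t : ℝ => q₂ + t * V₄) V₄ 0 := by
    simpa using ((hasDerivAt_id (0:ℝ)).mul_const V₄).const_add q₂
  have h1 : HasDerivAt (fun t : ℝ => 1 - (a + t*V₁) ^ 2 - (c + t*V₂) ^ 2)
      (-(2 * (a + 0*V₁) * V₁) - 2 * (c + 0*V₂) * V₂) 0 := by
    have h0 := (((hA.fun_pow 2).const_sub 1).fun_sub (hB.fun_pow 2))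
    refine h0.congr_deriv ?_
    push_cast
    ring
  have h2 : HasDerivAt (fun t : ℝ => 1 - (a + t*V₁) ^ 2)
      (-(2 * (a + 0*V₁) * V₁)) 0 := by
    have h0 := ((hA.fun_pow 2).const_sub 1)
    refine h0.congr_deriv ?_
    push_cast
    ring
  have hne1 : 1 - (a + 0*V₁) ^ 2 - (c + 0*V₂) ^ 2 ≠ 0 := by simpa using hs.ne'
  have hne2 : 1 - (a + 0*V₁) ^ 2 ≠ 0 := by simpa using hb.ne'
  have hR := h1.sqrt hne1
  have hW := h2.sqrt hne2
  have hwne : Real.sqrt (1 - (a + 0*V₁) ^ 2) ≠ 0 := by simpa using hw.ne'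
  have main := ((hR.fun_div (hW.fun_pow 2) (pow_ne_zero _ hwne)).const_mul μ₁).fun_add
    (hQ.fun_mul ((hR.fun_pow 3).fun_div (hW.fun_pow 3) (pow_ne_zero _ hwne)))
  rw [main.deriv]
  simp only [zero_mul, add_zero, mul_zero]
  have hr' : Real.sqrt (1 - a ^ 2 - c ^ 2) ≠ 0 := hr.ne'
  have hw' : Real.sqrt (1 - a ^ 2) ≠ 0 := hw.ne'
  set S := Real.sqrt (1 - a ^ 2 - c ^ 2) with hSdef
  set W := Real.sqrt (1 - a ^ 2) with hWdef
  field_simp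
  ring

/-- On `Ω` the derivative of the switching function along the flow is `LCGn`,
independently of the control. -/
theorem LC.innerEq (μ₁ v a c q₁ q₂ : ℝ) (h : a ^ 2 + c ^ 2 < 1) :
    fieldDeriv μ₁ v (switchingFn μ₁) (a, c, q₁, q₂) = LCGn μ₁ (a, c, q₁, q₂) := by
  have hb : 0 < 1 - a ^ 2 := by nlinarith [sq_nonneg c]
  have hs : 0 < 1 - a ^ 2 - c ^ 2 := by nlinarith
  have hw : 0 < Real.sqrt (1 - a ^ 2) := Real.sqrt_pos.mpr hb
  have hr : 0 < Real.sqrt (1 - a ^ 2 - c ^ 2) := Real.sqrt_pos.mpr hs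
  have hev : switchingFn μ₁ =ᶠ[𝓝 ((a, c, q₁, q₂) : ℝ × ℝ × ℝ × ℝ)] LCHn μ₁ := by
    have hopen : IsOpen {z : ℝ × ℝ × ℝ × ℝ | z.1 ^ 2 + z.2.1 ^ 2 < 1} :=
      isOpen_lt (by fun_prop) continuous_const
    filter_upwards [hopen.mem_nhds (by simpa using h)] with y hy
    have hy' : y.1 ^ 2 + y.2.1 ^ 2 < 1 := hy
    have hb' : 0 < 1 - y.1 ^ 2 := by nlinarith [sq_nonneg y.2.1]
    have hs' : 0 ≤ 1 - y.1 ^ 2 - y.2.1 ^ 2 := by nlinarith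
    simp only [switchingFn, LCHn]
    rw [LC.rpow32 _ _ hs' hb'.le, Real.sq_sqrt hb'.le]
    ring
  have hproj : ((a, c, q₁, q₂) : ℝ × ℝ × ℝ × ℝ).1 ^ 2
      + ((a, c, q₁, q₂) : ℝ × ℝ × ℝ × ℝ).2.1 ^ 2 < 1 := by simpa using h
  unfold fieldDeriv
  rw [hev.fderiv_eq, LC.combinedField_eq μ₁ v _ hproj,
    LC.fderiv_along _ _ _ (LC.diffHn μ₁ _ hproj)]
  rw [LC.dirHn μ₁ a c q₁ q₂ _ _ _ _ h]
  simp only [LCGn]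
  have hr' : Real.sqrt (1 - a ^ 2 - c ^ 2) ≠ 0 := hr.ne'
  have hw' : Real.sqrt (1 - a ^ 2) ≠ 0 := hw.ne'
  set S := Real.sqrt (1 - a ^ 2 - c ^ 2) with hSdef
  set W := Real.sqrt (1 - a ^ 2) with hWdef
  field_simp
  ring

theorem LC.deriv_affine (C D u : ℝ) : deriv (fun v : ℝ => C + v * D) u = D := by
  simpa using (((hasDerivAt_id u).mul_const D).const_add C).deriv

/-- The Legendre–Clebsch computation: at every point of the singular locus the
partial derivative with respect to the control `u` of the second derivative of
the switching function along the flow equals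
`-(1 - x₁² - x₂²)^(3/2)/(1 - x₁²)³ < 0`; hence the singular trajectory has
order 1 and violates the generalized Legendre–Clebsch condition. -/
theorem legendre_clebsch_violated (μ₁ u x₁ x₂ p₁ p₂ : ℝ)
    (hΩ : x₁ ^ 2 + x₂ ^ 2 < 1)
    (hp₂ : p₂ = -μ₁ * Real.sqrt (1 - x₁ ^ 2) / (1 - x₁ ^ 2 - x₂ ^ 2))
    (hp₁ : p₁ = -x₂ * (μ₁ * x₁ * Real.sqrt (1 - x₁ ^ 2) + Real.sqrt (1 - x₁ ^ 2 - x₂ ^ 2))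
      / ((1 - x₁ ^ 2) * (1 - x₁ ^ 2 - x₂ ^ 2))) :
    deriv (fun v : ℝ =>
        fieldDeriv μ₁ v (fieldDeriv μ₁ v (switchingFn μ₁)) (x₁, x₂, p₁, p₂)) u
      = -((1 - x₁ ^ 2 - x₂ ^ 2) ^ ((3 : ℝ) / 2)) / (1 - x₁ ^ 2) ^ 3 ∧
    -((1 - x₁ ^ 2 - x₂ ^ 2) ^ ((3 : ℝ) / 2)) / (1 - x₁ ^ 2) ^ 3 < 0 := by
  have hb : 0 < 1 - x₁ ^ 2 := by nlinarith [sq_nonneg x₂]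
  have hs : 0 < 1 - x₁ ^ 2 - x₂ ^ 2 := by nlinarith
  have hw : 0 < Real.sqrt (1 - x₁ ^ 2) := Real.sqrt_pos.mpr hb
  have hr : 0 < Real.sqrt (1 - x₁ ^ 2 - x₂ ^ 2) := Real.sqrt_pos.mpr hs
  constructor
  · subst hp₁ hp₂
    have hz : ((x₁, x₂,
        -x₂ * (μ₁ * x₁ * Real.sqrt (1 - x₁ ^ 2) + Real.sqrt (1 - x₁ ^ 2 - x₂ ^ 2))
          / ((1 - x₁ ^ 2) * (1 - x₁ ^ 2 - x₂ ^ 2)),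
        -μ₁ * Real.sqrt (1 - x₁ ^ 2) / (1 - x₁ ^ 2 - x₂ ^ 2)) : ℝ × ℝ × ℝ × ℝ).1 ^ 2
        + ((x₁, x₂,
        -x₂ * (μ₁ * x₁ * Real.sqrt (1 - x₁ ^ 2) + Real.sqrt (1 - x₁ ^ 2 - x₂ ^ 2))
          / ((1 - x₁ ^ 2) * (1 - x₁ ^ 2 - x₂ ^ 2)),
        -μ₁ * Real.sqrt (1 - x₁ ^ 2) / (1 - x₁ ^ 2 - x₂ ^ 2)) : ℝ × ℝ × ℝ × ℝ).2.1 ^ 2 < 1 := by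
      simpa using hΩ
    set P1 : ℝ := -x₂ * (μ₁ * x₁ * Real.sqrt (1 - x₁ ^ 2) + Real.sqrt (1 - x₁ ^ 2 - x₂ ^ 2))
      / ((1 - x₁ ^ 2) * (1 - x₁ ^ 2 - x₂ ^ 2)) with hP1def
    set P2 : ℝ := -μ₁ * Real.sqrt (1 - x₁ ^ 2) / (1 - x₁ ^ 2 - x₂ ^ 2) with hP2def
    set z₀ : ℝ × ℝ × ℝ × ℝ := (x₁, x₂, P1, P2) with hz₀def
    -- the vector `B` (coefficient of `v` in the combined field)
    set b2 : ℝ := Real.sqrt (1 - x₁^2 - x₂^2) ^ 3 / Real.sqrt (1 - x₁^2) ^ 3 with hb2def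
    set b3 : ℝ := -(P2 * (-3 * x₁ * Real.sqrt (1 - x₁^2 - x₂^2) *
        (Real.sqrt (1 - x₁^2) ^ 2 - Real.sqrt (1 - x₁^2 - x₂^2) ^ 2) / Real.sqrt (1 - x₁^2) ^ 5)
        + μ₁ * (x₁ * (2 * Real.sqrt (1 - x₁^2 - x₂^2) ^ 2 - Real.sqrt (1 - x₁^2) ^ 2)
          / (Real.sqrt (1 - x₁^2 - x₂^2) * Real.sqrt (1 - x₁^2) ^ 4))) with hb3def
    set b4 : ℝ := 3 * P2 * x₂ * Real.sqrt (1 - x₁^2 - x₂^2) / Real.sqrt (1 - x₁^2) ^ 3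
        + μ₁ * (x₂ / (Real.sqrt (1 - x₁^2 - x₂^2) * Real.sqrt (1 - x₁^2) ^ 2)) with hb4def
    set A : ℝ × ℝ × ℝ × ℝ := (x₂, -x₁,
      P2 + x₁ * (2 * Real.sqrt (1 - x₁^2 - x₂^2) ^ 2 - Real.sqrt (1 - x₁^2) ^ 2)
        / (Real.sqrt (1 - x₁^2 - x₂^2) * Real.sqrt (1 - x₁^2) ^ 4),
      -(P1 + x₂ / (Real.sqrt (1 - x₁^2 - x₂^2) * Real.sqrt (1 - x₁^2) ^ 2))) with hAdef
    set B : ℝ × ℝ × ℝ × ℝ := ((0:ℝ), b2, b3, b4) with hBdef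
    have hAB : ∀ v : ℝ, combinedField μ₁ v z₀ = A + v • B := by
      intro v
      rw [hz₀def, LC.combinedField_eq μ₁ v _ hz, hAdef, hBdef, hb2def, hb3def, hb4def,
        hP1def, hP2def]
      simp only [Prod.mk_add_mk, Prod.smul_mk, smul_eq_mul, Prod.mk.injEq]
      refine ⟨by simp [hz₀def], by ring, by ring, by ring⟩
    have key : (fun v : ℝ =>
        fieldDeriv μ₁ v (fieldDeriv μ₁ v (switchingFn μ₁)) z₀)
        = (fun v : ℝ => (fderiv ℝ (LCGn μ₁) z₀) A + v * (fderiv ℝ (LCGn μ₁) z₀) B) := by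
      funext v
      have heq : fieldDeriv μ₁ v (switchingFn μ₁) =ᶠ[𝓝 z₀] LCGn μ₁ := by
        have hopen : IsOpen {z : ℝ × ℝ × ℝ × ℝ | z.1 ^ 2 + z.2.1 ^ 2 < 1} :=
          isOpen_lt (by fun_prop) continuous_const
        filter_upwards [hopen.mem_nhds (by rw [hz₀def]; exact hz)] with y hy
        obtain ⟨a, c, q₁, q₂⟩ := y
        exact LC.innerEq μ₁ v a c q₁ q₂ (by simpa using hy)
      have : fieldDeriv μ₁ v (fieldDeriv μ₁ v (switchingFn μ₁)) z₀
          = fderiv ℝ (fieldDeriv μ₁ v (switchingFn μ₁)) z₀ (combinedField μ₁ v z₀) := rfl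
      rw [this, heq.fderiv_eq, hAB v, map_add, map_smul, smul_eq_mul]
    rw [key, LC.deriv_affine]
    rw [LC.fderiv_along _ _ _ (LC.diffGn μ₁ _ (by rw [hz₀def]; exact hz))]
    have hT1 : (1 - x₁^2 - x₂^2) ^ ((3:ℝ)/2) = Real.sqrt (1 - x₁^2 - x₂^2) ^ 3 := by
      simpa using LC.rpow32 (1 - x₁^2 - x₂^2) 1 hs.le zero_le_one
    have hT2 : (1 - x₁^2) ^ 3 = Real.sqrt (1 - x₁^2) ^ 6 := by
      conv_lhs => rw [← Real.sq_sqrt hb.le]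
      ring
    rw [hT1, hT2]
    have hfun2 : (fun t : ℝ => LCGn μ₁ (z₀ + t • B)) = (fun t : ℝ =>
        2 * μ₁ * x₁ * (x₂ + t * b2) * Real.sqrt (1 - x₁ ^ 2 - (x₂ + t * b2) ^ 2)
          / Real.sqrt (1 - x₁ ^ 2) ^ 4
        + 3 * (P2 + t * b4) * x₁ * (x₂ + t * b2)
            * Real.sqrt (1 - x₁ ^ 2 - (x₂ + t * b2) ^ 2) ^ 3 / Real.sqrt (1 - x₁ ^ 2) ^ 5
        - (P1 + t * b3) * Real.sqrt (1 - x₁ ^ 2 - (x₂ + t * b2) ^ 2) ^ 3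
            / Real.sqrt (1 - x₁ ^ 2) ^ 3
        - (x₂ + t * b2) * Real.sqrt (1 - x₁ ^ 2 - (x₂ + t * b2) ^ 2) ^ 2
            / Real.sqrt (1 - x₁ ^ 2) ^ 5) := by
      funext t
      rw [hz₀def, hBdef]
      simp only [LCGn, Prod.mk_add_mk, Prod.smul_mk, smul_eq_mul, mul_zero, add_zero]
    rw [hfun2]
    have hB2 : HasDerivAt (fun t : ℝ => x₂ + t * b2) b2 0 := by
      simpa using ((hasDerivAt_id (0:ℝ)).mul_const b2).const_add x₂
    have hP1t : HasDerivAt (fun t : ℝ => P1 + t * b3) b3 0 := by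
      simpa using ((hasDerivAt_id (0:ℝ)).mul_const b3).const_add P1
    have hP2t : HasDerivAt (fun t : ℝ => P2 + t * b4) b4 0 := by
      simpa using ((hasDerivAt_id (0:ℝ)).mul_const b4).const_add P2
    have h1 : HasDerivAt (fun t : ℝ => 1 - x₁ ^ 2 - (x₂ + t * b2) ^ 2)
        (-(2 * (x₂ + 0 * b2) * b2)) 0 := by
      have h0 := (hB2.fun_pow 2).const_sub (1 - x₁ ^ 2)
      refine h0.congr_deriv ?_
      push_cast
      ring
    have hne1 : 1 - x₁ ^ 2 - (x₂ + 0 * b2) ^ 2 ≠ 0 := by simpa using hs.ne'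
    have hR := h1.sqrt hne1
    have term1 := ((hB2.const_mul (2 * μ₁ * x₁)).fun_mul hR).div_const (Real.sqrt (1 - x₁ ^ 2) ^ 4)
    have term2 := ((((hP2t.const_mul 3).mul_const x₁).fun_mul hB2).fun_mul (hR.fun_pow 3)).div_const
      (Real.sqrt (1 - x₁ ^ 2) ^ 5)
    have term3 := (hP1t.fun_mul (hR.fun_pow 3)).div_const (Real.sqrt (1 - x₁ ^ 2) ^ 3)
    have term4 := (hB2.fun_mul (hR.fun_pow 2)).div_const (Real.sqrt (1 - x₁ ^ 2) ^ 5)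
    have main2 := ((term1.fun_add term2).fun_sub term3).fun_sub term4
    rw [main2.deriv]
    simp only [zero_mul, mul_zero, add_zero]
    rw [hb3def, hb4def, hP1def, hP2def, hb2def]
    have hW2 : Real.sqrt (1 - x₁ ^ 2) ^ 2 = 1 - x₁ ^ 2 := Real.sq_sqrt hb.le
    have hS2 : Real.sqrt (1 - x₁ ^ 2 - x₂ ^ 2) ^ 2 = 1 - x₁ ^ 2 - x₂ ^ 2 := Real.sq_sqrt hs.le
    have hr' : Real.sqrt (1 - x₁ ^ 2 - x₂ ^ 2) ≠ 0 := hr.ne'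
    have hw' : Real.sqrt (1 - x₁ ^ 2) ≠ 0 := hw.ne'
    have hsne : (1 : ℝ) - x₁ ^ 2 - x₂ ^ 2 ≠ 0 := hs.ne'
    have hbne : (1 : ℝ) - x₁ ^ 2 ≠ 0 := hb.ne'
    set S := Real.sqrt (1 - x₁ ^ 2 - x₂ ^ 2) with hSdef
    set W := Real.sqrt (1 - x₁ ^ 2) with hWdef
    have hrel : W ^ 2 = S ^ 2 + x₂ ^ 2 := by rw [hS2, hW2]; ring
    rw [← hS2, ← hW2]
    field_simp
    linear_combination (S ^ 3 + 2 * μ₁ * x₁ * W * S ^ 2) * hrel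
  · have h1 : 0 < (1 - x₁ ^ 2 - x₂ ^ 2) ^ ((3:ℝ)/2) := Real.rpow_pos_of_pos hs _
    have h2 : 0 < (1 - x₁ ^ 2) ^ 3 := pow_pos hb 3
    exact div_neg_of_neg_of_pos (neg_lt_zero.mpr h1) h2
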